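/- Let ψ : ℝᵐ → ℝ ∪ {+∞} be proper lsc convex with minimizer y⋆, let λ > 0, p ≥ 1, φ = (1/(p+1))‖·‖₂^{p+1}, and let the iterates satisfy: w^k = (A_k/A_{k+1}) y^k + (1 − A_k/A_{k+1}) y⁰ with A_k = k^{p+1}, v^k an ε_k-subgradient of ψ at y^{k+1}, y^{k+1} = w^k − λ∇φ*(v^k), and ε_k = c/(k+1)^{p+1} for some c ≥ 0. Then for all k ≥ 1: ψ(y^k) − ψ(y⋆) ≤ (λ^{−p}(p+1)^p‖y⁰ − y⋆‖^{p+1} + c)/k^p. -/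

import Mathlib

open scoped RealInnerProductSpace

lemma aux_rpow_mul_self {r e : ℝ} (hr : 0 ≤ r) (he : 0 ≤ e) : r ^ e * r = r ^ (e + 1) := by
  rcases hr.eq_or_lt with h | h
  · rw [← h, mul_zero, Real.zero_rpow (by linarith)]
  · rw [Real.rpow_add_one h.ne']

lemma aux_young {p D s : ℝ} (hp : 1 ≤ p) (hD : 0 ≤ D) (hs : 0 ≤ s) :
    (p + 1) * D * s ^ p ≤ s ^ (p + 1) + (p + 1) ^ p * D ^ (p + 1) := by
  have hp0 : 0 < p := lt_of_lt_of_le zero_lt_one hp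
  have hp1 : (0:ℝ) < p + 1 := by linarith
  have hconj : Real.HolderConjugate ((p + 1) / p) (p + 1) := by
    rw [Real.holderConjugate_iff]
    constructor
    · rw [lt_div_iff₀ hp0]; linarith
    · field_simp
  have h := Real.young_inequality_of_nonneg (a := s ^ p) (b := (p + 1) * D)
    (Real.rpow_nonneg hs p) (by positivity) hconj
  have hA : (s ^ p) ^ ((p + 1) / p) = s ^ (p + 1) := by
    rw [← Real.rpow_mul hs]
    congr 1
    field_simp
  have hBv : ((p + 1) * D) ^ (p + 1) = (p + 1) ^ (p + 1) * D ^ (p + 1) :=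
    Real.mul_rpow hp1.le hD
  have hC : (p + 1) ^ (p + 1) = (p + 1) ^ p * (p + 1) := Real.rpow_add_one hp1.ne' p
  have hsp : (0:ℝ) ≤ s ^ (p + 1) := Real.rpow_nonneg hs _
  rw [hA, hBv, hC] at h
  calc (p + 1) * D * s ^ p = s ^ p * ((p + 1) * D) := by ring
    _ ≤ s ^ (p + 1) / ((p + 1) / p) + (p + 1) ^ p * (p + 1) * D ^ (p + 1) / (p + 1) := h
    _ = s ^ (p + 1) * (p / (p + 1)) + (p + 1) ^ p * D ^ (p + 1) := by
        field_simp
    _ ≤ s ^ (p + 1) + (p + 1) ^ p * D ^ (p + 1) := by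
        have : s ^ (p + 1) * (p / (p + 1)) ≤ s ^ (p + 1) := by
          apply mul_le_of_le_one_right hsp
          rw [div_le_one hp1]; linarith
        linarith


lemma aux_diff {p : ℝ} (hp : 1 ≤ p) (k : ℕ) :
    ((k : ℝ) + 1) ^ (p + 1) - (k : ℝ) ^ (p + 1) ≤ (p + 1) * ((k : ℝ) + 1) ^ p := by
  have hb : (0:ℝ) < (k : ℝ) + 1 := by positivity
  set s : ℝ := (k : ℝ) / ((k : ℝ) + 1) - 1 with hs
  have hs1 : (-1 : ℝ) ≤ s := by
    rw [hs]
    have : (0:ℝ) ≤ (k : ℝ) / ((k : ℝ) + 1) := by positivity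
    linarith
  have hB := one_add_mul_self_le_rpow_one_add hs1 (by linarith : (1:ℝ) ≤ p + 1)
  have h1s : 1 + s = (k : ℝ) / ((k : ℝ) + 1) := by rw [hs]; ring
  rw [h1s, Real.div_rpow (by positivity) hb.le] at hB
  have hpow : (0:ℝ) < ((k : ℝ) + 1) ^ (p + 1) := Real.rpow_pos_of_pos hb _
  have h2 : (1 + (p + 1) * s) * (((k : ℝ) + 1) ^ (p + 1)) ≤ (k : ℝ) ^ (p + 1) :=
    (le_div_iff₀ hpow).mp hB
  have h3 : ((k : ℝ) + 1) ^ (p + 1) = ((k : ℝ) + 1) ^ p * ((k : ℝ) + 1) :=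
    Real.rpow_add_one hb.ne' p
  have hsk : s * ((k : ℝ) + 1) = -1 := by rw [hs]; field_simp; ring
  have h4 : (1 + (p + 1) * s) * (((k : ℝ) + 1) ^ (p + 1))
      = ((k : ℝ) + 1) ^ (p + 1) - (p + 1) * ((k : ℝ) + 1) ^ p := by
    rw [h3]
    linear_combination ((p + 1) * ((k : ℝ) + 1) ^ p) * hsk
  linarith [h2, h4.symm.trans_le h2]

lemma aux_step {m : ℕ} (ψ : EuclideanSpace ℝ (Fin m) → ℝ)
    (ystar y0 yk yk1 wk vk : EuclideanSpace ℝ (Fin m))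
    (L A B K εk p : ℝ) (hL : 0 < L) (hA : 0 ≤ A) (hAB : A ≤ B)
    (hK : 0 < K) (hBK : B = K ^ (p + 1)) (hdiff : B - A ≤ (p + 1) * K ^ p)
    (hp : 1 ≤ p)
    (hwk : wk = (A / B) • yk + (1 - A / B) • y0)
    (h1 : ψ yk ≥ ψ yk1 + ⟪vk, yk - yk1⟫ - εk)
    (h2 : ψ ystar ≥ ψ yk1 + ⟪vk, ystar - yk1⟫ - εk)
    (hvk : vk = (L * ‖wk - yk1‖ ^ (p - 1)) • (wk - yk1)) :
    B * (ψ yk1 - ψ ystar) ≤ A * (ψ yk - ψ ystar)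
      + (L * (p + 1) ^ p * ‖y0 - ystar‖ ^ (p + 1) + B * εk) := by
  have hB0 : 0 < B := hBK ▸ Real.rpow_pos_of_pos hK _
  set r : ℝ := ‖wk - yk1‖ with hrdef
  have hr : 0 ≤ r := norm_nonneg _
  set D : ℝ := ‖y0 - ystar‖ with hDdef
  have hD : 0 ≤ D := norm_nonneg _
  -- vector identity
  have hvec : A • (yk - yk1) + (B - A) • (ystar - yk1)
      = B • (wk - yk1) + (B - A) • (ystar - y0) := by
    rw [hwk]
    match_scalars <;> (try field_simp) <;> ring
  have hS : A * ⟪vk, yk - yk1⟫ + (B - A) * ⟪vk, ystar - yk1⟫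
      = B * ⟪vk, wk - yk1⟫ + (B - A) * ⟪vk, ystar - y0⟫ := by
    rw [← real_inner_smul_right, ← real_inner_smul_right, ← inner_add_right, hvec,
      inner_add_right, real_inner_smul_right, real_inner_smul_right]
  -- inner product with u
  have hIu : ⟪vk, wk - yk1⟫ = L * r ^ (p + 1) := by
    rw [hvk, real_inner_smul_left, real_inner_self_eq_norm_mul_norm, ← hrdef]
    rw [show L * r ^ (p - 1) * (r * r) = L * (r ^ (p - 1) * r * r) by ring,
      aux_rpow_mul_self hr (by linarith), aux_rpow_mul_self hr (by linarith)]
    norm_num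
  -- lower bound on the other inner product
  have hIs : -(L * r ^ p * D) ≤ ⟪vk, ystar - y0⟫ := by
    have hcs : -(r * D) ≤ ⟪wk - yk1, ystar - y0⟫ := by
      have h := abs_real_inner_le_norm (wk - yk1) (ystar - y0)
      have hn : ‖ystar - y0‖ = D := by rw [hDdef, norm_sub_rev]
      rw [hn, ← hrdef] at h
      linarith [neg_abs_le ⟪wk - yk1, ystar - y0⟫]
    rw [hvk, real_inner_smul_left]
    have hc : 0 ≤ L * r ^ (p - 1) := by positivity
    have := mul_le_mul_of_nonneg_left hcs hc
    have hrp : L * r ^ (p - 1) * (r * D) = L * r ^ p * D := by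
      rw [show L * r ^ (p - 1) * (r * D) = L * (r ^ (p - 1) * r) * D by ring,
        aux_rpow_mul_self hr (by linarith)]
      norm_num
    nlinarith [this, hrp]
  -- Young step
  have hyoung : (B - A) * (L * r ^ p * D) ≤ B * (L * r ^ (p + 1)) + L * (p + 1) ^ p * D ^ (p + 1) := by
    have hs : 0 ≤ K * r := by positivity
    have hY := aux_young hp hD hs
    have hKp : (K * r) ^ p = K ^ p * r ^ p := Real.mul_rpow hK.le hr
    have hKp1 : (K * r) ^ (p + 1) = K ^ (p + 1) * r ^ (p + 1) := Real.mul_rpow hK.le hr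
    rw [hKp, hKp1, ← hBK] at hY
    have hrpD : 0 ≤ r ^ p * D := by positivity
    have h1' : (B - A) * (r ^ p * D) ≤ (p + 1) * K ^ p * (r ^ p * D) :=
      mul_le_mul_of_nonneg_right hdiff hrpD
    nlinarith [hY, h1', hL.le, Real.rpow_nonneg hr (p + 1), Real.rpow_nonneg hD (p + 1)]
  -- combine
  have hδ1 : A * (ψ yk1 - ψ ystar) ≤ A * (ψ yk - ψ ystar - ⟪vk, yk - yk1⟫ + εk) :=
    mul_le_mul_of_nonneg_left (by linarith) hA
  have hδ2 : (B - A) * (ψ yk1 - ψ ystar) ≤ (B - A) * (- ⟪vk, ystar - yk1⟫ + εk) :=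
    mul_le_mul_of_nonneg_left (by linarith) (by linarith)
  have hIs' : -((B - A) * ⟪vk, ystar - y0⟫) ≤ (B - A) * (L * r ^ p * D) := by
    have := mul_le_mul_of_nonneg_left hIs (show (0:ℝ) ≤ B - A by linarith)
    linarith
  rw [hIu] at hS
  have e1 : A * (ψ yk - ψ ystar - ⟪vk, yk - yk1⟫ + εk)
      = A * (ψ yk - ψ ystar) - A * ⟪vk, yk - yk1⟫ + A * εk := by ring
  have e2 : (B - A) * (- ⟪vk, ystar - yk1⟫ + εk)
      = -((B - A) * ⟪vk, ystar - yk1⟫) + (B - A) * εk := by ring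
  rw [e1] at hδ1
  rw [e2] at hδ2
  linarith [hδ1, hδ2, hS, hyoung, hIs']

open scoped RealInnerProductSpace

/-- Global sublinear rate of the inexact power proximal point method with averaging
(`θ_k = A_k/A_{k+1}`, `A_k = k^{p+1}`) under `ε_k`-subgradient errors
`ε_k = c/(k+1)^{p+1}`: for all `k ≥ 1`,
`ψ(y^k) − ψ(y⋆) ≤ (λ^{−p}(p+1)^p ‖y⁰ − y⋆‖^{p+1} + c)/k^p`. -/
theorem stmt4 (m : ℕ) (ψ : EuclideanSpace ℝ (Fin m) → ℝ)
    (hψconv : ConvexOn ℝ Set.univ ψ) (hψlsc : LowerSemicontinuous ψ)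
    (ystar : EuclideanSpace ℝ (Fin m)) (hmin : ∀ y, ψ ystar ≤ ψ y)
    (lam p c : ℝ) (hlam : 0 < lam) (hp : 1 ≤ p) (hc : 0 ≤ c)
    (y v w : ℕ → EuclideanSpace ℝ (Fin m)) (ε : ℕ → ℝ)
    (hε : ∀ k, ε k = c / ((k : ℝ) + 1) ^ (p + 1))
    (hw : ∀ k, w k = (((k : ℝ) ^ (p + 1)) / (((k : ℝ) + 1) ^ (p + 1))) • y k
        + (1 - ((k : ℝ) ^ (p + 1)) / (((k : ℝ) + 1) ^ (p + 1))) • y 0)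
    (hsub : ∀ k, ∀ z, ψ z ≥ ψ (y (k + 1)) + ⟪v k, z - y (k + 1)⟫ - ε k)
    (hupd : ∀ k, v k =
        (lam ^ (-p) * ‖w k - y (k + 1)‖ ^ (p - 1) : ℝ) • (w k - y (k + 1))) :
    ∀ k : ℕ, 1 ≤ k →
      ψ (y k) - ψ ystar ≤
        (lam ^ (-p) * (p + 1) ^ p * ‖y 0 - ystar‖ ^ (p + 1) + c) / (k : ℝ) ^ p := by
  have hL : (0:ℝ) < lam ^ (-p) := Real.rpow_pos_of_pos hlam _
  set C : ℝ := lam ^ (-p) * (p + 1) ^ p * ‖y 0 - ystar‖ ^ (p + 1) + c with hCdef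
  have hC0 : 0 ≤ C := by
    have : (0:ℝ) ≤ lam ^ (-p) * (p + 1) ^ p * ‖y 0 - ystar‖ ^ (p + 1) := by
      have h1 : (0:ℝ) ≤ (p + 1) ^ p := Real.rpow_nonneg (by linarith) _
      have h2 : (0:ℝ) ≤ ‖y 0 - ystar‖ ^ (p + 1) := Real.rpow_nonneg (norm_nonneg _) _
      positivity
    linarith
  have hstep : ∀ k : ℕ, ((k : ℝ) + 1) ^ (p + 1) * (ψ (y (k + 1)) - ψ ystar)
      ≤ (k : ℝ) ^ (p + 1) * (ψ (y k) - ψ ystar) + C := by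
    intro k
    have hK : (0:ℝ) < (k : ℝ) + 1 := by positivity
    have h := aux_step ψ ystar (y 0) (y k) (y (k + 1)) (w k) (v k)
      (lam ^ (-p)) ((k : ℝ) ^ (p + 1)) (((k : ℝ) + 1) ^ (p + 1)) ((k : ℝ) + 1) (ε k) p
      hL (Real.rpow_nonneg (Nat.cast_nonneg k) _)
      (Real.rpow_le_rpow (Nat.cast_nonneg k) (by linarith) (by linarith))
      hK rfl (aux_diff hp k) hp (hw k) (hsub k (y k)) (hsub k ystar) (hupd k)
    have hεc : (((k : ℝ) + 1) ^ (p + 1)) * ε k = c := by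
      rw [hε k]
      field_simp
    rw [hεc] at h
    linarith
  have hsum : ∀ k : ℕ, (k : ℝ) ^ (p + 1) * (ψ (y k) - ψ ystar) ≤ (k : ℝ) * C := by
    intro k
    induction k with
    | zero => simp [Real.zero_rpow (show p + 1 ≠ 0 by linarith)]
    | succ n ih =>
      have h := hstep n
      push_cast
      linarith
  intro k hk
  have hk0 : (0:ℝ) < (k : ℝ) := by exact_mod_cast hk
  have hkp : (0:ℝ) < (k : ℝ) ^ p := Real.rpow_pos_of_pos hk0 p
  have hkp1 : (k : ℝ) ^ (p + 1) = (k : ℝ) ^ p * (k : ℝ) := Real.rpow_add_one hk0.ne' p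
  have h := hsum k
  rw [hkp1] at h
  rw [le_div_iff₀ hkp]
  have h2 : ((k : ℝ) ^ p * (ψ (y k) - ψ ystar)) * (k : ℝ) ≤ C * (k : ℝ) := by
    nlinarith [h]
  have h3 := le_of_mul_le_mul_right h2 hk0
  linarith [h3]
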